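/- The eigenvalues of the FTCS heat equation matrix M (tridiagonal with diagonal 1−2r and off-diagonals r) are λ_i = 1 − 4r·sin²(iπ/(2(N+1))) for i = 1,...,N. -/

import Mathlib

open Real

/-- The `N×N` tridiagonal matrix with constant diagonal `b` and off-diagonals `a`. -/
def triDiag (N : ℕ) (a b : ℝ) : Matrix (Fin N) (Fin N) ℝ :=
  Matrix.of fun k l =>
    if k = l then b else if (k : ℕ) + 1 = (l : ℕ) ∨ (l : ℕ) + 1 = (k : ℕ) then a else 0

open Polynomial Matrix in
lemma aux_charpoly_eval {n : ℕ} (M : Matrix (Fin n) (Fin n) ℝ) (x : ℝ) :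
    M.charpoly.eval x = (algebraMap ℝ (Matrix (Fin n) (Fin n) ℝ) x - M).det := by
  have hmap : (Matrix.charmatrix M).map (Polynomial.eval x) = algebraMap ℝ _ x - M := by
    ext i j
    by_cases h : i = j
    · subst h; simp [Matrix.charmatrix_apply_eq, Matrix.algebraMap_matrix_apply]
    · simp [Matrix.charmatrix_apply_ne _ _ _ h, Matrix.algebraMap_matrix_apply, h]
  rw [Matrix.charpoly, ← coe_evalRingHom, RingHom.map_det]
  simp only [RingHom.mapMatrix_apply, coe_evalRingHom]
  rw [hmap]

open Polynomial Matrix in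
lemma aux_mem_spectrum_iff {n : ℕ} (M : Matrix (Fin n) (Fin n) ℝ) (x : ℝ) :
    x ∈ spectrum ℝ M ↔ M.charpoly.eval x = 0 := by
  rw [spectrum.mem_iff, Matrix.isUnit_iff_isUnit_det, isUnit_iff_ne_zero, not_not,
    aux_charpoly_eval]

lemma aux_triDiag_mulVec (N : ℕ) (a b : ℝ) (w : ℕ → ℝ) (h0 : w 0 = 0) (hN : w (N+1) = 0)
    (j : Fin N) :
    (triDiag N a b).mulVec (fun l => w ((l : ℕ) + 1)) j
      = a * w (j : ℕ) + b * w ((j : ℕ) + 1) + a * w ((j : ℕ) + 2) := by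
  have hsplit : ∀ l : Fin N,
      (triDiag N a b) j l * w ((l : ℕ) + 1)
        = b * (if j = l then w ((l : ℕ)+1) else 0)
          + a * (if (j : ℕ) + 1 = (l : ℕ) then w ((l : ℕ)+1) else 0)
          + a * (if (l : ℕ) + 1 = (j : ℕ) then w ((l : ℕ)+1) else 0) := by
    intro l
    simp only [triDiag, Matrix.of_apply]
    split_ifs with h1 h2 h3 h4 h5 h6 h7 h8
    all_goals try subst h1
    all_goals first
      | ring1
      | (exfalso; omega)
  simp only [Matrix.mulVec, dotProduct]
  rw [Finset.sum_congr rfl fun l _ => hsplit l]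
  rw [Finset.sum_add_distrib, Finset.sum_add_distrib, ← Finset.mul_sum, ← Finset.mul_sum,
    ← Finset.mul_sum]
  have S1 : (∑ l : Fin N, if j = l then w ((l : ℕ)+1) else 0) = w ((j : ℕ) + 1) := by
    simp
  have S2 : (∑ l : Fin N, if (j : ℕ) + 1 = (l : ℕ) then w ((l : ℕ)+1) else 0)
      = w ((j : ℕ) + 2) := by
    by_cases h : (j : ℕ) + 1 < N
    · have : ∀ l : Fin N, ((j : ℕ) + 1 = (l : ℕ)) ↔ l = ⟨(j : ℕ) + 1, h⟩ := by
        intro l; rw [Fin.ext_iff]; constructor <;> intro hh <;> simp_all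
      rw [Finset.sum_congr rfl fun l _ => if_congr (this l) rfl rfl]
      simp
    · have hj : (j : ℕ) + 1 = N := by have := j.isLt; omega
      have : ∀ l : Fin N, ¬ ((j : ℕ) + 1 = (l : ℕ)) := by
        intro l hh; have := l.isLt; omega
      rw [Finset.sum_congr rfl fun l _ => if_neg (this l)]
      simp [show (j : ℕ) + 2 = N + 1 by omega, hN]
  have S3 : (∑ l : Fin N, if (l : ℕ) + 1 = (j : ℕ) then w ((l : ℕ)+1) else 0)
      = w (j : ℕ) := by
    rcases Nat.eq_zero_or_pos (j : ℕ) with hj | hj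
    · have : ∀ l : Fin N, ¬ ((l : ℕ) + 1 = (j : ℕ)) := by intro l hh; omega
      rw [Finset.sum_congr rfl fun l _ => if_neg (this l)]
      simp [hj, h0]
    · have hlt : (j : ℕ) - 1 < N := by have := j.isLt; omega
      have : ∀ l : Fin N, ((l : ℕ) + 1 = (j : ℕ)) ↔ l = ⟨(j : ℕ) - 1, hlt⟩ := by
        intro l; rw [Fin.ext_iff]; constructor <;> intro hh <;> simp_all <;> omega
      rw [Finset.sum_congr rfl fun l _ => if_congr (this l) rfl rfl]
      simp [show (j : ℕ) - 1 + 1 = (j : ℕ) by omega]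
  rw [S1, S2, S3]; ring

/-- The eigenvalues of the FTCS heat matrix (tridiagonal, diagonal `1-2r`, off-diagonals `r`)
are exactly `λ_i = 1 - 4r sin²(iπ/(2(N+1)))`, `i = 1, …, N`. -/
theorem ftcs_heat_spectrum (N : ℕ) (r : ℝ) (hr : 0 < r) :
    spectrum ℝ (triDiag N r (1 - 2 * r)) =
      {x : ℝ | ∃ i : Fin N, x = 1 - 4 * r * sin (((i : ℕ) + 1) * π / (2 * (N + 1))) ^ 2} := by
  set M := triDiag N r (1 - 2 * r) with hM
  set ev : Fin N → ℝ :=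
    fun i => 1 - 4 * r * sin (((i : ℕ) + 1) * π / (2 * (N + 1))) ^ 2 with hev
  set θ : Fin N → ℝ := fun i => ((i : ℕ) + 1) * π / (N + 1) with hθ
  have hN1 : (0:ℝ) < (N:ℝ) + 1 := by positivity
  -- half-angle rewriting
  have hhalf : ∀ i : Fin N, (((i:ℕ):ℝ) + 1) * π / (2 * (N + 1)) = θ i / 2 := by
    intro i; rw [hθ]; field_simp
  have hev' : ∀ i : Fin N, ev i = 1 - 2*r + 2*r * Real.cos (θ i) := by
    intro i
    rw [hev]; simp only; rw [hhalf i]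
    have h2 := Real.cos_two_mul (θ i / 2)
    have h3 := Real.sin_sq_add_cos_sq (θ i / 2)
    rw [show 2 * (θ i / 2) = θ i by ring] at h2
    nlinarith [h2, h3]
  -- bounds on θ
  have hθpos : ∀ i : Fin N, 0 < θ i := by
    intro i; rw [hθ]; positivity
  have hθlt : ∀ i : Fin N, θ i < π := by
    intro i
    rw [hθ, div_lt_iff₀ hN1]
    have hi : ((i:ℕ):ℝ) + 1 < (N:ℝ) + 1 := by
      have := i.isLt; push_cast; exact_mod_cast by exact_mod_cast Nat.add_lt_add_right this 1
    nlinarith [Real.pi_pos]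
  -- each ev i is in the spectrum
  have hmem : ∀ i : Fin N, ev i ∈ spectrum ℝ M := by
    intro i
    rw [aux_mem_spectrum_iff, aux_charpoly_eval]
    rw [← Matrix.exists_mulVec_eq_zero_iff]
    set w : ℕ → ℝ := fun m => Real.sin (m * θ i) with hw
    have hw0 : w 0 = 0 := by simp [hw]
    have hwN : w (N+1) = 0 := by
      rw [hw]; simp only
      have : ((N:ℝ)+1) * θ i = ((i:ℕ)+1) * π := by
        rw [hθ]; field_simp
      push_cast
      rw [this, show (((i:ℕ):ℝ)+1) = (((i:ℕ)+1 : ℕ):ℝ) by push_cast; ring,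
        Real.sin_nat_mul_pi]
    refine ⟨fun l => w ((l : ℕ) + 1), ?_, ?_⟩
    · intro hcontra
      have h0 : w ((⟨0, i.pos⟩ : Fin N) + 1) = 0 := congrFun hcontra ⟨0, i.pos⟩
      rw [hw] at h0
      simp only [Fin.val_mk] at h0
      have hsin : Real.sin (θ i) > 0 :=
        Real.sin_pos_of_pos_of_lt_pi (hθpos i) (hθlt i)
      norm_num at h0
      exact absurd h0 (ne_of_gt hsin)
    · funext j
      rw [Matrix.sub_mulVec]
      have halg : (algebraMap ℝ (Matrix (Fin N) (Fin N) ℝ) (ev i)).mulVec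
          (fun l => w ((l : ℕ) + 1)) j = ev i * w ((j:ℕ)+1) := by
        rw [Algebra.algebraMap_eq_smul_one, Matrix.smul_mulVec, Matrix.one_mulVec]
        simp
      have hmv := aux_triDiag_mulVec N r (1 - 2*r) w hw0 hwN j
      simp only [Pi.sub_apply, Pi.zero_apply]
      rw [halg, hM, hmv, hev' i, hw]
      simp only
      push_cast
      rw [show ((j:ℕ):ℝ) * θ i = (((j:ℕ):ℝ)+1) * θ i - θ i by ring,
        show (((j:ℕ):ℝ)+2) * θ i = (((j:ℕ):ℝ)+1) * θ i + θ i by ring,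
        Real.sin_sub, Real.sin_add]
      ring
  -- injectivity of ev
  have hinj : Function.Injective ev := by
    intro i i' h
    rw [hev] at h
    simp only at h
    rw [hhalf i, hhalf i'] at h
    have hsq : Real.sin (θ i / 2) ^ 2 = Real.sin (θ i' / 2) ^ 2 := by
      nlinarith [h]
    have hnn : ∀ k : Fin N, 0 ≤ Real.sin (θ k / 2) := by
      intro k
      apply Real.sin_nonneg_of_nonneg_of_le_pi
      · linarith [hθpos k]
      · linarith [hθlt k, Real.pi_pos]
    have hs : Real.sin (θ i / 2) = Real.sin (θ i' / 2) := by
      nlinarith [hnn i, hnn i', hsq]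
    have hmemIcc : ∀ k : Fin N, θ k / 2 ∈ Set.Icc (-(π/2)) (π/2) := by
      intro k
      constructor
      · linarith [hθpos k, Real.pi_pos]
      · linarith [hθlt k]
    have := Real.injOn_sin (hmemIcc i) (hmemIcc i') hs
    have hθeq : θ i = θ i' := by linarith
    rw [hθ] at hθeq
    simp only at hθeq
    have hπ : π ≠ 0 := Real.pi_ne_zero
    have : ((i:ℕ):ℝ) = ((i':ℕ):ℝ) := by
      field_simp at hθeq
      linarith
    exact Fin.ext (by exact_mod_cast this)
  -- characteristic polynomial bookkeeping
  have hmonic : M.charpoly.Monic := Matrix.charpoly_monic M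
  have hpne : M.charpoly ≠ 0 := hmonic.ne_zero
  have hdeg : M.charpoly.natDegree = N := by
    rw [Matrix.charpoly_natDegree_eq_dim]; simp
  set m : Multiset ℝ := Finset.univ.val.map ev with hm
  have hmnodup : m.Nodup := Finset.univ.nodup.map hinj
  have hroot : ∀ i : Fin N, M.charpoly.IsRoot (ev i) := fun i =>
    (aux_mem_spectrum_iff M (ev i)).1 (hmem i)
  have hle : m ≤ M.charpoly.roots := by
    rw [Multiset.le_iff_count]
    intro x
    by_cases hx : x ∈ m
    · rw [Multiset.count_eq_one_of_mem hmnodup hx]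
      obtain ⟨i, _, hi⟩ := Multiset.mem_map.1 hx
      rw [Multiset.one_le_count_iff_mem, Polynomial.mem_roots hpne]
      exact hi ▸ hroot i
    · rw [Multiset.count_eq_zero_of_notMem hx]
      exact Nat.zero_le _
  have hcard : M.charpoly.roots.card ≤ m.card := by
    rw [hm, Multiset.card_map]
    simpa [hdeg] using M.charpoly.card_roots'
  have heq : m = M.charpoly.roots := Multiset.eq_of_le_of_card_le hle hcard
  -- conclude
  ext x
  simp only [Set.mem_setOf_eq]
  constructor
  · intro hx
    have hx' : M.charpoly.IsRoot x := (aux_mem_spectrum_iff M x).1 hx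
    have : x ∈ M.charpoly.roots := (Polynomial.mem_roots hpne).2 hx'
    rw [← heq] at this
    obtain ⟨i, _, hi⟩ := Multiset.mem_map.1 this
    exact ⟨i, hi.symm⟩
  · rintro ⟨i, rfl⟩
    exact hmem i
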